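/- Let G and H be finite connected graphs with Γ(G) = Γ(H) = k. If it is not the case that G and H are both isomorphic to K_1, and not the case that G and H are both isomorphic to K_2, then Γ(G □ H) ≥ k + 1. -/

import Mathlib

open SimpleGraph

/-- A greedy `k`-coloring of `G`: a partition of the vertex set into nonempty stable sets
`S 0, …, S (k-1)` such that for all `j < i`, every vertex of `S i` has a neighbor in `S j`. -/
def IsGreedyColoring {V : Type*} (G : SimpleGraph V) (k : ℕ) (S : Fin k → Set V) : Prop :=
  (∀ v : V, ∃! i, v ∈ S i) ∧
  (∀ i, (S i).Nonempty) ∧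
  (∀ i, ∀ v ∈ S i, ∀ w ∈ S i, ¬ G.Adj v w) ∧
  (∀ i j : Fin k, j < i → ∀ v ∈ S i, ∃ w ∈ S j, G.Adj v w)

/-- The Grundy number `Γ(G)`: the largest `k` such that `G` has a greedy `k`-coloring. -/
noncomputable def grundy {V : Type*} [Fintype V] (G : SimpleGraph V) : ℕ :=
  sSup {k | ∃ S : Fin k → Set V, IsGreedyColoring G k S}

open Set
def GreedyOn {V : Type*} (G : SimpleGraph V) (W : Set V) (k : ℕ) (S : Fin k → Set V) : Prop :=
  (∀ v ∈ W, ∃! i, v ∈ S i) ∧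
  (∀ i, (S i).Nonempty) ∧
  (∀ i, S i ⊆ W) ∧
  (∀ i, ∀ v ∈ S i, ∀ w ∈ S i, ¬ G.Adj v w) ∧
  (∀ i j : Fin k, j < i → ∀ v ∈ S i, ∃ w ∈ S j, G.Adj v w)

lemma greedyOn_univ_iff {V : Type*} (G : SimpleGraph V) (k : ℕ) (S : Fin k → Set V) :
    GreedyOn G Set.univ k S ↔ IsGreedyColoring G k S := by
  constructor
  · rintro ⟨h1, h2, h3, h4, h5⟩
    exact ⟨fun v => h1 v (mem_univ v), h2, h4, h5⟩
  · rintro ⟨h1, h2, h4, h5⟩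
    exact ⟨fun v _ => h1 v, h2, fun i => subset_univ _, h4, h5⟩

lemma exists_extension {V : Type*} [Fintype V] (G : SimpleGraph V) :
    ∀ (n : ℕ) (W : Set V) (k : ℕ) (S : Fin k → Set V), Wᶜ.ncard ≤ n →
      GreedyOn G W k S → ∃ k', ∃ S' : Fin k' → Set V, k ≤ k' ∧ IsGreedyColoring G k' S' := by
  intro n
  induction n with
  | zero =>
    intro W k S hn hGr
    have hWc : Wᶜ = ∅ := by
      have : Wᶜ.Finite := Set.toFinite _
      rw [← Set.ncard_eq_zero this]; omega
    have hW : W = Set.univ := by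
      rw [← compl_empty_iff, hWc]
    subst hW
    exact ⟨k, S, le_rfl, (greedyOn_univ_iff G k S).1 hGr⟩
  | succ n ih =>
    intro W k S hn hGr
    by_cases hW : W = Set.univ
    · subst hW
      exact ⟨k, S, le_rfl, (greedyOn_univ_iff G k S).1 hGr⟩
    · obtain ⟨v, hv⟩ : ∃ v, v ∉ W := by
        by_contra h; push_neg at h
        exact hW (Set.eq_univ_of_forall h)
      obtain ⟨hq, h2, h3, h4, h5⟩ := hGr
      have hcard : (insert v W)ᶜ.ncard ≤ n := by
        have h1 : (insert v W)ᶜ = Wᶜ \ {v} := by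
          ext x; simp [Set.mem_compl_iff, Set.mem_diff, and_comm]
        have h2 : (Wᶜ \ {v}).ncard < Wᶜ.ncard :=
          Set.ncard_diff_singleton_lt_of_mem hv (Set.toFinite _)
        rw [h1]; omega
      by_cases hex : ∃ m : ℕ, ∃ hm : m < k, ∀ w ∈ S ⟨m, hm⟩, ¬ G.Adj v w
      · -- insert v into the least class with no neighbor of v
        classical
        set j0 : ℕ := Nat.find hex with hj0def
        obtain ⟨hj0k, hj0⟩ := Nat.find_spec hex
        set j : Fin k := ⟨j0, hj0k⟩ with hjdef
        set S' : Fin k → Set V := Function.update S j (insert v (S j)) with hS'def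
        have hmemS' : ∀ (i : Fin k) (u : V), u ∈ S' i ↔ (u ∈ S i ∨ (i = j ∧ u = v)) := by
          intro i u
          by_cases hij : i = j
          · subst hij; simp [hS'def, Function.update_self]; tauto
          · simp [hS'def, Function.update_of_ne hij, hij]
        have hSnotv : ∀ (i : Fin k) (u : V), u ∈ S i → u ≠ v := by
          intro i u hu heq; subst heq; exact hv (h3 i hu)
        refine ih (insert v W) k S' hcard ⟨?_, ?_, ?_, ?_, ?_⟩
        · intro u hu
          rcases Set.mem_insert_iff.1 hu with rfl | huW
          · refine ⟨j, (hmemS' j _).2 (Or.inr ⟨rfl, rfl⟩), ?_⟩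
            · intro i hi
              rcases (hmemS' i _).1 hi with hi | ⟨hij, _⟩
              · exact absurd rfl (hSnotv i u hi)
              · exact hij
          · obtain ⟨i, hi, hiu⟩ := hq u huW
            refine ⟨i, (hmemS' i _).2 (Or.inl hi), ?_⟩
            · intro i' hi'
              rcases (hmemS' i' _).1 hi' with hi' | ⟨_, huv⟩
              · exact hiu i' hi'
              · exact absurd huv (fun h => hv (h ▸ huW))
        · intro i
          obtain ⟨u, hu⟩ := h2 i
          exact ⟨u, (hmemS' i u).2 (Or.inl hu)⟩
        · intro i u hu
          rw [hmemS'] at hu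
          rcases hu with hu | ⟨_, rfl⟩
          · exact Set.mem_insert_of_mem _ (h3 i hu)
          · exact Set.mem_insert _ _
        · intro i p hp q hq'
          rw [hmemS'] at hp hq'
          rcases hp with hp | ⟨hij, rfl⟩ <;> rcases hq' with hq' | ⟨hij', rfl⟩
          · exact h4 i p hp q hq'
          · subst hij'; exact fun h => hj0 p hp h.symm
          · subst hij; exact hj0 q hq'
          · exact fun h => (G.irrefl h)
        · intro i i' hlt u hu
          rw [hmemS'] at hu
          rcases hu with hu | ⟨hij, rfl⟩
          · obtain ⟨w, hw, hadj⟩ := h5 i i' hlt u hu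
            exact ⟨w, (hmemS' i' w).2 (Or.inl hw), hadj⟩
          · subst hij
            have hi'lt : (i' : ℕ) < j0 := hlt
            have := Nat.find_min hex hi'lt
            push_neg at this
            obtain ⟨w, hw, hadj⟩ := this i'.2
            refine ⟨w, (hmemS' i' w).2 (Or.inl ?_), hadj⟩
            · have : (⟨(i' : ℕ), i'.2⟩ : Fin k) = i' := by ext; rfl
              rwa [this] at hw
      · -- v has a neighbor in every class: new top class {v}
        push_neg at hex
        set S' : Fin (k+1) → Set V := Fin.snoc S {v} with hS'def
        have hcast : ∀ i : Fin k, S' i.castSucc = S i := fun i => by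
          simp [hS'def]
        have hlast : S' (Fin.last k) = {v} := by simp [hS'def]
        have hsplit : ∀ i : Fin (k+1), (∃ j : Fin k, i = j.castSucc) ∨ i = Fin.last k := by
          intro i
          by_cases h : (i : ℕ) < k
          · exact Or.inl ⟨⟨i, h⟩, by ext; simp⟩
          · right; ext; simp only [Fin.val_last]; omega
        have hSnotv : ∀ (i : Fin k) (u : V), u ∈ S i → u ≠ v := by
          intro i u hu heq; subst heq; exact hv (h3 i hu)
        have hGr' : GreedyOn G (insert v W) (k+1) S' := by
          refine ⟨?_, ?_, ?_, ?_, ?_⟩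
          · intro u hu
            rcases Set.mem_insert_iff.1 hu with rfl | huW
            · refine ⟨Fin.last k, by show u ∈ S' (Fin.last k); rw [hlast]; exact Set.mem_singleton u, ?_⟩
              intro i hi
              rcases hsplit i with ⟨j', rfl⟩ | rfl
              · rw [hcast] at hi; exact absurd rfl (hSnotv _ _ hi)
              · rfl
            · obtain ⟨i, hi, hiu⟩ := hq u huW
              refine ⟨i.castSucc, by show u ∈ S' i.castSucc; rw [hcast]; exact hi, ?_⟩
              intro i' hi'
              rcases hsplit i' with ⟨j', rfl⟩ | rfl
              · rw [hcast] at hi'; rw [hiu j' hi']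
              · rw [hlast] at hi'; exact absurd hi' (fun h => hv (h ▸ huW))
          · intro i
            rcases hsplit i with ⟨j', rfl⟩ | rfl
            · rw [hcast]; exact h2 j'
            · exact ⟨v, by rw [hlast]; exact Set.mem_singleton v⟩
          · intro i u hu
            rcases hsplit i with ⟨j', rfl⟩ | rfl
            · rw [hcast] at hu; exact Set.mem_insert_of_mem _ (h3 _ hu)
            · rw [hlast] at hu; rw [hu]; exact Set.mem_insert _ _
          · intro i p hp q hq'
            rcases hsplit i with ⟨j', rfl⟩ | rfl
            · rw [hcast] at hp hq'; exact h4 _ p hp q hq'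
            · rw [hlast] at hp hq'; rw [hp, hq']; exact fun h => G.irrefl h
          · intro i i' hlt u hu
            rcases hsplit i with ⟨j', rfl⟩ | rfl
            · rw [hcast] at hu
              have hlt2 : (i' : ℕ) < k := lt_trans hlt j'.2
              have hlt3 : (⟨(i' : ℕ), hlt2⟩ : Fin k) < j' := by
                simpa [Fin.lt_def] using hlt
              obtain ⟨w, hw, hadj⟩ := h5 j' ⟨i', hlt2⟩ hlt3 u hu
              have : i' = (⟨(i' : ℕ), hlt2⟩ : Fin k).castSucc := by ext; simp
              rw [this, hcast]
              exact ⟨w, hw, hadj⟩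
            · rw [hlast] at hu; subst hu
              have hlt2 : (i' : ℕ) < k := by simpa [Fin.lt_def] using hlt
              obtain ⟨w, hw, hadj⟩ := hex i' hlt2
              have : i' = (⟨(i' : ℕ), hlt2⟩ : Fin k).castSucc := by ext; simp
              rw [this, hcast]
              exact ⟨w, hw, hadj⟩
        obtain ⟨k', S'', hk', hc⟩ := ih (insert v W) (k+1) S' hcard hGr'
        exact ⟨k', S'', le_trans (Nat.le_succ k) hk', hc⟩

section Grundy

variable {V : Type*} [Fintype V] (G : SimpleGraph V)

lemma grundySet_nonempty : {k | ∃ S : Fin k → Set V, IsGreedyColoring G k S}.Nonempty := by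
  have h0 : GreedyOn G (∅ : Set V) 0 (Fin.elim0) := by
    refine ⟨?_, ?_, ?_, ?_, ?_⟩
    · intro v hv; exact absurd hv (Set.notMem_empty v)
    · intro i; exact i.elim0
    · intro i; exact i.elim0
    · intro i; exact i.elim0
    · intro i; exact i.elim0
  obtain ⟨k', S', _, hc⟩ := exists_extension G ((∅ : Set V)ᶜ.ncard) ∅ 0 Fin.elim0 le_rfl h0
  exact ⟨k', S', hc⟩

lemma grundySet_bddAbove : BddAbove {k | ∃ S : Fin k → Set V, IsGreedyColoring G k S} := by
  refine ⟨Fintype.card V, ?_⟩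
  rintro k ⟨S, h1, h2, _, _⟩
  classical
  have hinj : Function.Injective (fun i : Fin k => (h2 i).choose) := by
    intro i i' heq
    have hi := (h2 i).choose_spec
    have hi' := (h2 i').choose_spec
    have heq' : (h2 i).choose = (h2 i').choose := heq
    rw [heq'] at hi
    obtain ⟨j, _, hj⟩ := h1 ((h2 i').choose)
    rw [hj i hi, hj i' hi']
  simpa using Fintype.card_le_of_injective _ hinj

lemma grundy_spec : ∃ S : Fin (grundy G) → Set V, IsGreedyColoring G (grundy G) S :=
  Nat.sSup_mem (grundySet_nonempty G) (grundySet_bddAbove G)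

lemma le_grundy {n : ℕ} (h : ∃ S : Fin n → Set V, IsGreedyColoring G n S) : n ≤ grundy G :=
  le_csSup (grundySet_bddAbove G) h

lemma le_grundy_of_greedyOn {n k : ℕ} {W : Set V} {S : Fin k → Set V}
    (h : GreedyOn G W k S) (hn : n ≤ k) : n ≤ grundy G := by
  obtain ⟨k', S', hk', hc⟩ := exists_extension G (Wᶜ.ncard) W k S le_rfl h
  exact le_trans (le_trans hn hk') (le_grundy G ⟨S', hc⟩)

end Grundy

/-- transfer a greedy coloring across the symmetry of the box product -/
lemma isGreedyColoring_boxProd_swap {α β : Type*} (G : SimpleGraph α) (H : SimpleGraph β)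
    {k : ℕ} {S : Fin k → Set (β × α)} (h : IsGreedyColoring (H.boxProd G) k S) :
    IsGreedyColoring (G.boxProd H) k (fun i => Prod.swap ⁻¹' (S i)) := by
  obtain ⟨h1, h2, h4, h5⟩ := h
  have hadj : ∀ p q : α × β, (G.boxProd H).Adj p q ↔ (H.boxProd G).Adj p.swap q.swap := by
    intro p q
    rw [SimpleGraph.boxProd_adj, SimpleGraph.boxProd_adj]
    constructor
    · rintro (⟨h, h'⟩ | ⟨h, h'⟩)
      · exact Or.inr ⟨h, h'⟩
      · exact Or.inl ⟨h, h'⟩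
    · rintro (⟨h, h'⟩ | ⟨h, h'⟩)
      · exact Or.inr ⟨h, h'⟩
      · exact Or.inl ⟨h, h'⟩
  refine ⟨?_, ?_, ?_, ?_⟩
  · intro p
    obtain ⟨i, hi, hiu⟩ := h1 p.swap
    exact ⟨i, hi, fun i' hi' => hiu i' hi'⟩
  · intro i
    obtain ⟨p, hp⟩ := h2 i
    exact ⟨p.swap, by simpa using hp⟩
  · intro i p hp q hq hpq
    exact h4 i p.swap hp q.swap hq ((hadj p q).1 hpq)
  · intro i j hij p hp
    obtain ⟨q, hq, hq'⟩ := h5 i j hij p.swap hp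
    refine ⟨q.swap, by simpa using hq, ?_⟩
    rw [hadj]; simpa using hq'

/-- a connected non-complete graph contains an induced path on three vertices -/
lemma exists_induced_path {V : Type*} (G : SimpleGraph V) (hc : G.Connected)
    (hnc : ¬ ∀ u v : V, u ≠ v → G.Adj u v) :
    ∃ x0 x1 x2 : V, G.Adj x0 x1 ∧ G.Adj x0 x2 ∧ x1 ≠ x2 ∧ ¬ G.Adj x1 x2 := by
  push_neg at hnc
  obtain ⟨u, v, hne, hnadj⟩ := hnc
  obtain ⟨w⟩ := hc.preconnected u v
  clear hc
  induction w with
  | nil => exact absurd rfl hne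
  | @cons u c v h p ih =>
    by_cases hcv : c = v
    · subst hcv; exact absurd h hnadj
    · by_cases hadj : G.Adj c v
      · exact ⟨c, u, v, h.symm, hadj, hne, hnadj⟩
      · exact ih hcv hadj

open scoped Classical in
/-- auxiliary color function for the P3 construction -/
noncomputable def BColor {α β : Type*} (s : α → ℕ) (k : ℕ) (a : α) (x0 x2 : β)
    (p : α × β) : ℕ :=
  if p = (a, x0) then k else if p.2 = x0 then s p.1 - 1 else if p = (a, x2) then k - 2 else s p.1

/-- auxiliary domain for the P3 construction -/
def BDom {α β : Type*} (s : α → ℕ) (k : ℕ) (a : α) (x0 x1 x2 : β) : Set (α × β) :=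
  {p | (p.2 = x0 ∧ 1 ≤ s p.1) ∨ p.2 = x1 ∨ (p.2 = x2 ∧ (s p.1 + 3 ≤ k ∨ p.1 = a))}

lemma exists_sfun {V : Type*} (G : SimpleGraph V) {k : ℕ} {S : Fin k → Set V}
    (hS : IsGreedyColoring G k S) :
    ∃ s : V → ℕ, (∀ v, s v < k) ∧ (∀ m, m < k → ∃ v, s v = m) ∧
      (∀ v w, s v = s w → ¬ G.Adj v w) ∧ (∀ v t, t < s v → ∃ w, G.Adj v w ∧ s w = t) := by
  classical
  obtain ⟨hq, hne, hstab, hgr⟩ := hS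
  refine ⟨fun v => ((hq v).choose : ℕ), ?_, ?_, ?_, ?_⟩
  · intro v; exact ((hq v).choose).2
  · intro m hm
    obtain ⟨v, hv⟩ := hne ⟨m, hm⟩
    refine ⟨v, ?_⟩
    show ((hq v).choose : ℕ) = m
    have := (hq v).choose_spec.2 ⟨m, hm⟩ hv
    rw [← this]
  · intro v w hvw hadj
    have hv := (hq v).choose_spec.1
    have hw := (hq w).choose_spec.1
    have : (hq v).choose = (hq w).choose := Fin.ext hvw
    rw [this] at hv
    exact hstab _ v hv w hw hadj
  · intro v t ht
    have htk : t < k := lt_trans ht ((hq v).choose).2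
    obtain ⟨w, hw, hadj⟩ := hgr (hq v).choose ⟨t, htk⟩ (by simpa [Fin.lt_def] using ht)
      v (hq v).choose_spec.1
    refine ⟨w, hadj, ?_⟩
    show ((hq w).choose : ℕ) = t
    have := (hq w).choose_spec.2 ⟨t, htk⟩ hw
    rw [← this]

lemma lemmaB {α β : Type*} (G : SimpleGraph α) (H : SimpleGraph β) {k : ℕ} (hk : 2 ≤ k)
    (s : α → ℕ) (hslt : ∀ b, s b < k) (hnes : ∀ m, m < k → ∃ b, s b = m)
    (hstab : ∀ b b', s b = s b' → ¬ G.Adj b b')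
    (hwit : ∀ b t, t < s b → ∃ b', G.Adj b b' ∧ s b' = t)
    (a : α) (ha : s a = k - 1)
    (x0 x1 x2 : β) (h01 : H.Adj x0 x1) (h02 : H.Adj x0 x2) (h12ne : x1 ≠ x2)
    (h12 : ¬ H.Adj x1 x2) :
    GreedyOn (G.boxProd H) (BDom s k a x0 x1 x2) (k+1)
      (fun m => {p | p ∈ BDom s k a x0 x1 x2 ∧ BColor s k a x0 x2 p = (m : ℕ)}) := by
  have hx01 : x0 ≠ x1 := h01.ne
  have hx02 : x0 ≠ x2 := h02.ne
  -- color computation lemmas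
  have hca0 : BColor s k a x0 x2 (a, x0) = k := if_pos rfl
  have hcx0 : ∀ b, b ≠ a → BColor s k a x0 x2 (b, x0) = s b - 1 := by
    intro b hb
    unfold BColor
    rw [if_neg (fun h => hb (congrArg Prod.fst h)), if_pos rfl]
  have hcx1 : ∀ b, BColor s k a x0 x2 (b, x1) = s b := by
    intro b
    unfold BColor
    rw [if_neg (fun h => hx01 (congrArg Prod.snd h).symm),
      if_neg (fun h : x1 = x0 => hx01 h.symm),
      if_neg (fun h => h12ne (congrArg Prod.snd h))]
  have hca2 : BColor s k a x0 x2 (a, x2) = k - 2 := by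
    unfold BColor
    rw [if_neg (fun h => hx02 (congrArg Prod.snd h).symm),
      if_neg (fun h : x2 = x0 => hx02 h.symm), if_pos rfl]
  have hcx2 : ∀ b, b ≠ a → BColor s k a x0 x2 (b, x2) = s b := by
    intro b hb
    unfold BColor
    rw [if_neg (fun h => hx02 (congrArg Prod.snd h).symm),
      if_neg (fun h : x2 = x0 => hx02 h.symm),
      if_neg (fun h => hb (congrArg Prod.fst h))]
  -- membership lemmas
  have hW0 : ∀ b, 1 ≤ s b → (b, x0) ∈ BDom s k a x0 x1 x2 := fun b h => Or.inl ⟨rfl, h⟩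
  have hW1 : ∀ b, (b, x1) ∈ BDom s k a x0 x1 x2 := fun b => Or.inr (Or.inl rfl)
  have hW2 : ∀ b, (s b + 3 ≤ k ∨ b = a) → (b, x2) ∈ BDom s k a x0 x1 x2 :=
    fun b h => Or.inr (Or.inr ⟨rfl, h⟩)
  have hbound : ∀ p ∈ BDom s k a x0 x1 x2, BColor s k a x0 x2 p < k + 1 := by
    rintro ⟨b, y⟩ hp
    rcases hp with ⟨hy, hs1⟩ | hy | ⟨hy, hcond⟩
    · cases hy
      by_cases hba : b = a
      · subst hba; rw [hca0]; omega
      · rw [hcx0 b hba]; have := hslt b; omega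
    · cases hy; rw [hcx1]; have := hslt b; omega
    · cases hy
      by_cases hba : b = a
      · subst hba; rw [hca2]; omega
      · rw [hcx2 b hba]; have := hslt b; omega
  refine ⟨?_, ?_, ?_, ?_, ?_⟩
  · -- unique membership
    intro p hp
    refine ⟨⟨BColor s k a x0 x2 p, hbound p hp⟩, ⟨hp, rfl⟩, ?_⟩
    rintro i ⟨_, hc⟩
    exact Fin.ext hc.symm
  · -- nonempty classes
    intro m
    by_cases hm : (m : ℕ) = k
    · refine ⟨(a, x0), hW0 a (by omega), ?_⟩
      rw [hca0, hm]
    · have hmk : (m : ℕ) < k := by have := m.2; omega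
      obtain ⟨b, hb⟩ := hnes m hmk
      exact ⟨(b, x1), hW1 b, by rw [hcx1, hb]⟩
  · -- subset
    intro i p hp; exact hp.1
  · -- stable
    rintro i ⟨b, y⟩ ⟨hpW, hpc⟩ ⟨b', y'⟩ ⟨hqW, hqc⟩ hadj
    have hcc : BColor s k a x0 x2 (b, y) = BColor s k a x0 x2 (b', y') := by
      rw [hpc, hqc]
    rcases SimpleGraph.boxProd_adj.1 hadj with ⟨hG, hyy⟩ | ⟨hH, hbb⟩
    · -- same second coordinate
      have hyy' : y = y' := hyy
      subst hyy'
      have hG' : G.Adj b b' := hG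
      have hbne : b ≠ b' := hG'.ne
      have hpW' : (y = x0 ∧ 1 ≤ s b) ∨ y = x1 ∨ (y = x2 ∧ (s b + 3 ≤ k ∨ b = a)) := hpW
      have hqW' : (y = x0 ∧ 1 ≤ s b') ∨ y = x1 ∨ (y = x2 ∧ (s b' + 3 ≤ k ∨ b' = a)) := hqW
      rcases hpW' with ⟨rfl, hs1⟩ | rfl | ⟨rfl, hcond⟩
      · rcases hqW' with ⟨-, hs1'⟩ | hy' | ⟨hy', -⟩
        · -- x0 x0
          by_cases hba : b = a <;> by_cases hb'a : b' = a
          · exact hbne (by rw [hba, hb'a])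
          · subst hba
            rw [hca0, hcx0 b' hb'a] at hcc
            have := hslt b'; omega
          · subst hb'a
            rw [hcx0 b hba, hca0] at hcc
            have := hslt b; omega
          · rw [hcx0 b hba, hcx0 b' hb'a] at hcc
            have : s b = s b' := by omega
            exact hstab b b' this hG'
        · exact hx01 hy'
        · exact hx02 hy'
      · rcases hqW' with ⟨hy', -⟩ | - | ⟨hy', -⟩
        · exact hx01 hy'.symm
        · -- x1 x1
          rw [hcx1, hcx1] at hcc
          exact hstab b b' hcc hG'
        · exact h12ne hy'
      · rcases hqW' with ⟨hy', -⟩ | hy' | ⟨-, hcond'⟩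
        · exact hx02 hy'.symm
        · exact h12ne hy'.symm
        · -- x2 x2
          by_cases hba : b = a <;> by_cases hb'a : b' = a
          · exact hbne (by rw [hba, hb'a])
          · subst hba
            rw [hca2, hcx2 b' hb'a] at hcc
            rcases hcond' with h | h
            · omega
            · exact hb'a h
          · subst hb'a
            rw [hcx2 b hba, hca2] at hcc
            rcases hcond with h | h
            · omega
            · exact hba h
          · rw [hcx2 b hba, hcx2 b' hb'a] at hcc
            exact hstab b b' hcc hG'
    · -- same first coordinate
      have hbb' : b = b' := hbb
      subst hbb'
      have hH' : H.Adj y y' := hH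
      have hyne : y ≠ y' := hH'.ne
      have hpW' : (y = x0 ∧ 1 ≤ s b) ∨ y = x1 ∨ (y = x2 ∧ (s b + 3 ≤ k ∨ b = a)) := hpW
      have hqW' : (y' = x0 ∧ 1 ≤ s b) ∨ y' = x1 ∨ (y' = x2 ∧ (s b + 3 ≤ k ∨ b = a)) := hqW
      rcases hpW' with ⟨rfl, hs1⟩ | rfl | ⟨rfl, hcond⟩ <;>
        rcases hqW' with ⟨rfl, hs1'⟩ | rfl | ⟨rfl, hcond'⟩
      · exact hyne rfl
      · -- x0 x1
        by_cases hba : b = a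
        · subst hba; rw [hca0, hcx1, ha] at hcc; omega
        · rw [hcx0 b hba, hcx1] at hcc; omega
      · -- x0 x2
        by_cases hba : b = a
        · subst hba; rw [hca0, hca2] at hcc; omega
        · rw [hcx0 b hba, hcx2 b hba] at hcc; omega
      · -- x1 x0
        by_cases hba : b = a
        · subst hba; rw [hcx1, hca0, ha] at hcc; omega
        · rw [hcx1, hcx0 b hba] at hcc; omega
      · exact hyne rfl
      · -- x1 x2
        exact h12 hH'
      · -- x2 x0
        by_cases hba : b = a
        · subst hba; rw [hca2, hca0] at hcc; omega
        · rcases hcond with h | h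
          · rw [hcx2 b hba, hcx0 b hba] at hcc; omega
          · exact hba h
      · -- x2 x1
        exact h12 hH'.symm
      · exact hyne rfl
  · -- greedy property
    intro i j hji
    rintro ⟨b, y⟩ ⟨hpW, hpc⟩
    have hlt : (j : ℕ) < BColor s k a x0 x2 (b, y) := by
      rw [hpc]; exact hji
    have hpW' : (y = x0 ∧ 1 ≤ s b) ∨ y = x1 ∨ (y = x2 ∧ (s b + 3 ≤ k ∨ b = a)) := hpW
    rcases hpW' with ⟨hy, hs1⟩ | hy | ⟨hy, hcond⟩
    · -- fiber x0
      have hy' : x0 = y := hy.symm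
      subst hy' 
      by_cases hba : b = a
      · subst hba
        rw [hca0] at hlt
        by_cases ht1 : (j : ℕ) = k - 1
        · refine ⟨(b, x1), ⟨hW1 b, by rw [hcx1, ha, ht1]⟩, ?_⟩
          exact SimpleGraph.boxProd_adj.2 (Or.inr ⟨h01, rfl⟩)
        · by_cases ht2 : (j : ℕ) = k - 2
          · refine ⟨(b, x2), ⟨hW2 b (Or.inr rfl), by rw [hca2, ht2]⟩, ?_⟩
            exact SimpleGraph.boxProd_adj.2 (Or.inr ⟨h02, rfl⟩)
          · have hta : (j : ℕ) + 1 < s b := by rw [ha]; omega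
            obtain ⟨b', hadj, hsb'⟩ := hwit b ((j : ℕ)+1) hta
            have hb'a : b' ≠ b := hadj.ne'
            refine ⟨(b', x0), ⟨hW0 b' (by omega), by rw [hcx0 b' hb'a]; omega⟩, ?_⟩
            exact SimpleGraph.boxProd_adj.2 (Or.inl ⟨hadj, rfl⟩)
      · rw [hcx0 b hba] at hlt
        obtain ⟨b', hadj, hsb'⟩ := hwit b ((j : ℕ)+1) (by omega)
        have hb'a : b' ≠ a := by
          intro h; subst h
          have := hslt b; omega
        refine ⟨(b', x0), ⟨hW0 b' (by omega), by rw [hcx0 b' hb'a]; omega⟩, ?_⟩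
        exact SimpleGraph.boxProd_adj.2 (Or.inl ⟨hadj, rfl⟩)
    · -- fiber x1
      have hy' : x1 = y := hy.symm
      subst hy'
      rw [hcx1] at hlt
      obtain ⟨b', hadj, hsb'⟩ := hwit b (j : ℕ) hlt
      refine ⟨(b', x1), ⟨hW1 b', by rw [hcx1, hsb']⟩, ?_⟩
      exact SimpleGraph.boxProd_adj.2 (Or.inl ⟨hadj, rfl⟩)
    · -- fiber x2
      have hy' : x2 = y := hy.symm
      subst hy'
      by_cases hba : b = a
      · subst hba
        rw [hca2] at hlt
        have hta : (j : ℕ) < s b := by rw [ha]; omega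
        obtain ⟨b', hadj, hsb'⟩ := hwit b (j : ℕ) hta
        have hb'a : b' ≠ b := hadj.ne'
        refine ⟨(b', x2), ⟨hW2 b' (Or.inl (by omega)), by rw [hcx2 b' hb'a, hsb']⟩, ?_⟩
        exact SimpleGraph.boxProd_adj.2 (Or.inl ⟨hadj, rfl⟩)
      · have hsb3 : s b + 3 ≤ k := by
          rcases hcond with h | h
          · exact h
          · exact absurd h hba
        rw [hcx2 b hba] at hlt
        obtain ⟨b', hadj, hsb'⟩ := hwit b (j : ℕ) hlt
        have hb'a : b' ≠ a := by
          intro h; subst h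
          have := hslt b; omega
        refine ⟨(b', x2), ⟨hW2 b' (Or.inl (by omega)), by rw [hcx2 b' hb'a, hsb']⟩, ?_⟩
        exact SimpleGraph.boxProd_adj.2 (Or.inl ⟨hadj, rfl⟩)

open scoped Classical in
/-- color function for the complete-times-complete construction -/
noncomputable def CColor {α β : Type*} {k : ℕ} (e : α ≃ Fin k) (y0 : β) (p : α × β) : ℕ :=
  if p.2 = y0 then (if (e p.1 : ℕ) = 0 then k else (e p.1 : ℕ) - 1)
  else (if (e p.1 : ℕ) = 0 then k - 1 else if (e p.1 : ℕ) = k - 1 then 0 else (e p.1 : ℕ))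

def CDom {α β : Type*} (y0 y1 : β) : Set (α × β) := {p | p.2 = y0 ∨ p.2 = y1}

lemma lemmaC {α β : Type*} (G : SimpleGraph α) (H : SimpleGraph β) {k : ℕ} (hk : 3 ≤ k)
    (e : α ≃ Fin k) (hGcomp : ∀ u v : α, u ≠ v → G.Adj u v)
    {y0 y1 : β} (hy : H.Adj y0 y1) :
    GreedyOn (G.boxProd H) (CDom y0 y1) (k+1)
      (fun m => {p | p ∈ CDom (α := α) y0 y1 ∧ CColor e y0 p = (m : ℕ)}) := by
  have hy01 : y0 ≠ y1 := hy.ne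
  have hcy0 : ∀ a : α, CColor e y0 (a, y0) =
      (if (e a : ℕ) = 0 then k else (e a : ℕ) - 1) := fun a => if_pos rfl
  have hcy1 : ∀ a : α, CColor e y0 (a, y1) =
      (if (e a : ℕ) = 0 then k - 1 else if (e a : ℕ) = k - 1 then 0 else (e a : ℕ)) :=
    fun a => if_neg (fun h : y1 = y0 => hy01 h.symm)
  have hesymm : ∀ (t : ℕ) (h : t < k), (e (e.symm ⟨t, h⟩) : ℕ) = t := by
    intro t h; rw [Equiv.apply_symm_apply]
  have hW0 : ∀ a : α, (a, y0) ∈ CDom (α := α) y0 y1 := fun a => Or.inl rfl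
  have hW1 : ∀ a : α, (a, y1) ∈ CDom (α := α) y0 y1 := fun a => Or.inr rfl
  have hadj0 : ∀ (a a' : α), a ≠ a' → ∀ y : β, (G.boxProd H).Adj (a, y) (a', y) :=
    fun a a' hne y => SimpleGraph.boxProd_adj.2 (Or.inl ⟨hGcomp a a' hne, rfl⟩)
  have hnesymm : ∀ (a : α) (t : ℕ) (h : t < k), (e a : ℕ) ≠ t → a ≠ e.symm ⟨t, h⟩ := by
    intro a t h hne heq
    apply hne
    rw [heq, hesymm]
  have hbound : ∀ p ∈ CDom (α := α) y0 y1, CColor e y0 p < k + 1 := by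
    rintro ⟨a, y⟩ hp
    have h1 := (e a).2
    rcases hp with hy' | hy'
    · have h2 : y0 = y := hy'.symm
      subst h2
      rw [hcy0]; split_ifs <;> omega
    · have h2 : y1 = y := hy'.symm
      subst h2
      rw [hcy1]; split_ifs <;> omega
  refine ⟨?_, ?_, ?_, ?_, ?_⟩
  · intro p hp
    refine ⟨⟨CColor e y0 p, hbound p hp⟩, ⟨hp, rfl⟩, ?_⟩
    rintro i ⟨_, hc⟩
    exact Fin.ext hc.symm
  · intro m
    have h0k : (0 : ℕ) < k := by omega
    by_cases hm : (m : ℕ) = k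
    · refine ⟨(e.symm ⟨0, h0k⟩, y0), hW0 _, ?_⟩
      rw [hcy0, hesymm, if_pos rfl, hm]
    · by_cases hm' : (m : ℕ) = k - 1
      · refine ⟨(e.symm ⟨0, h0k⟩, y1), hW1 _, ?_⟩
        rw [hcy1, hesymm, if_pos rfl, hm']
      · have hmk : (m : ℕ) + 1 < k := by have := m.2; omega
        refine ⟨(e.symm ⟨(m : ℕ) + 1, hmk⟩, y0), hW0 _, ?_⟩
        rw [hcy0, hesymm, if_neg (by omega)]
        omega
  · intro i p hp; exact hp.1
  · -- stability
    rintro i ⟨a, y⟩ ⟨hpW, hpc⟩ ⟨a', y'⟩ ⟨hqW, hqc⟩ hadj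
    have hcc : CColor e y0 (a, y) = CColor e y0 (a', y') := by rw [hpc, hqc]
    have h1 := (e a).2
    have h2 := (e a').2
    rcases SimpleGraph.boxProd_adj.1 hadj with ⟨hG, hyy⟩ | ⟨hH, hbb⟩
    · have hyy' : y = y' := hyy
      subst hyy'
      have hne : a ≠ a' := (show G.Adj a a' from hG).ne
      have hpW' : y = y0 ∨ y = y1 := hpW
      rcases hpW' with hy' | hy'
      · have h3 : y0 = y := hy'.symm
        subst h3
        rw [hcy0, hcy0] at hcc
        split_ifs at hcc <;>
          first
            | omega
            | exact hne (e.injective (Fin.ext (by omega)))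
      · have h3 : y1 = y := hy'.symm
        subst h3
        rw [hcy1, hcy1] at hcc
        split_ifs at hcc <;>
          first
            | omega
            | exact hne (e.injective (Fin.ext (by omega)))
    · have hbb' : a = a' := hbb
      subst hbb'
      have hyne : y ≠ y' := (show H.Adj y y' from hH).ne
      have hpW' : y = y0 ∨ y = y1 := hpW
      have hqW' : y' = y0 ∨ y' = y1 := hqW
      rcases hpW' with hy' | hy' <;> rcases hqW' with hy'' | hy''
      · exact hyne (hy'.trans hy''.symm)
      · rw [hy', hy''] at hcc
        rw [hcy0, hcy1] at hcc
        split_ifs at hcc <;> omega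
      · rw [hy', hy''] at hcc
        rw [hcy1, hcy0] at hcc
        split_ifs at hcc <;> omega
      · exact hyne (hy'.trans hy''.symm)
  · -- greedy
    intro i j hji
    rintro ⟨a, y⟩ ⟨hpW, hpc⟩
    have hlt : (j : ℕ) < CColor e y0 (a, y) := by rw [hpc]; exact hji
    have h1 := (e a).2
    have hpW' : y = y0 ∨ y = y1 := hpW
    rcases hpW' with hy' | hy'
    · have h3 : y0 = y := hy'.symm
      subst h3
      rw [hcy0] at hlt
      by_cases hea : (e a : ℕ) = 0
      · rw [if_pos hea] at hlt
        by_cases ht1 : (j : ℕ) = k - 1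
        · refine ⟨(a, y1), ⟨hW1 a, ?_⟩, SimpleGraph.boxProd_adj.2 (Or.inr ⟨hy, rfl⟩)⟩
          rw [hcy1, if_pos hea, ht1]
        · have htk : (j : ℕ) + 1 < k := by omega
          refine ⟨(e.symm ⟨(j : ℕ) + 1, htk⟩, y0),
            ⟨hW0 _, ?_⟩, hadj0 _ _ (hnesymm a _ htk (by omega)) y0⟩
          rw [hcy0, hesymm, if_neg (by omega)]
          omega
      · rw [if_neg hea] at hlt
        have htk : (j : ℕ) + 1 < k := by omega
        refine ⟨(e.symm ⟨(j : ℕ) + 1, htk⟩, y0),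
          ⟨hW0 _, ?_⟩, hadj0 _ _ (hnesymm a _ htk (by omega)) y0⟩
        rw [hcy0, hesymm, if_neg (by omega)]
        omega
    · have h3 : y1 = y := hy'.symm
      subst h3
      rw [hcy1] at hlt
      by_cases hea : (e a : ℕ) = 0
      · rw [if_pos hea] at hlt
        by_cases ht0 : (j : ℕ) = 0
        · have hk1 : k - 1 < k := by omega
          refine ⟨(e.symm ⟨k - 1, hk1⟩, y1),
            ⟨hW1 _, ?_⟩, hadj0 _ _ (hnesymm a _ hk1 (by omega)) y1⟩
          rw [hcy1, hesymm, if_neg (by omega), if_pos rfl, ht0]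
        · have htk : (j : ℕ) < k := by omega
          refine ⟨(e.symm ⟨(j : ℕ), htk⟩, y1),
            ⟨hW1 _, ?_⟩, hadj0 _ _ (hnesymm a _ htk (by omega)) y1⟩
          rw [hcy1, hesymm, if_neg ht0, if_neg (by omega)]
      · rw [if_neg hea] at hlt
        by_cases hea' : (e a : ℕ) = k - 1
        · rw [if_pos hea'] at hlt; omega
        · rw [if_neg hea'] at hlt
          by_cases ht0 : (j : ℕ) = 0
          · have hk1 : k - 1 < k := by omega
            refine ⟨(e.symm ⟨k - 1, hk1⟩, y1),
              ⟨hW1 _, ?_⟩, hadj0 _ _ (hnesymm a _ hk1 (by omega)) y1⟩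
            rw [hcy1, hesymm, if_neg (by omega), if_pos rfl, ht0]
          · have htk : (j : ℕ) < k := by omega
            refine ⟨(e.symm ⟨(j : ℕ), htk⟩, y1),
              ⟨hW1 _, ?_⟩, hadj0 _ _ (hnesymm a _ htk (by omega)) y1⟩
            rw [hcy1, hesymm, if_neg ht0, if_neg (by omega)]

lemma equiv_fin_of_complete {V : Type*} (G : SimpleGraph V) {k : ℕ} {S : Fin k → Set V}
    (hS : IsGreedyColoring G k S) (hcomp : ∀ u v : V, u ≠ v → G.Adj u v) :
    Nonempty (V ≃ Fin k) := by
  classical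
  obtain ⟨hq, hne, hstab, -⟩ := hS
  have hinj : Function.Injective (fun i : Fin k => (hne i).choose) := by
    intro i i' heq
    have heq' : (hne i).choose = (hne i').choose := heq
    have hi := (hne i).choose_spec
    have hi' := (hne i').choose_spec
    rw [heq'] at hi
    obtain ⟨j, -, hj⟩ := hq ((hne i').choose)
    rw [hj i hi, hj i' hi']
  have hsurj : Function.Surjective (fun i : Fin k => (hne i).choose) := by
    intro v
    obtain ⟨i, hi, -⟩ := hq v
    refine ⟨i, ?_⟩
    show (hne i).choose = v
    by_contra hne'
    exact hstab i ((hne i).choose) ((hne i).choose_spec) v hi (hcomp _ _ hne')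
  exact ⟨(Equiv.ofBijective _ ⟨hinj, hsurj⟩).symm⟩

lemma iso_K1_of_grundy_one {V : Type*} (G : SimpleGraph V) (hc : G.Connected)
    {S : Fin 1 → Set V} (hS : IsGreedyColoring G 1 S) :
    Nonempty (G ≃g (⊤ : SimpleGraph (Fin 1))) := by
  classical
  have hedgeless : ∀ u v : V, ¬ G.Adj u v := by
    intro u v hadj
    obtain ⟨iu, hu, -⟩ := hS.1 u
    obtain ⟨iv, hv, -⟩ := hS.1 v
    have hii : iu = iv := Subsingleton.elim _ _
    rw [hii] at hu
    exact hS.2.2.1 iv u hu v hv hadj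
  have hsub : ∀ u v : V, u = v := by
    intro u v
    obtain ⟨w⟩ := hc.preconnected u v
    cases w with
    | nil => rfl
    | cons h p => exact absurd h (hedgeless _ _)
  have hne : Nonempty V := hc.nonempty
  obtain ⟨a⟩ := hne
  refine ⟨⟨⟨fun _ => 0, fun _ => a, fun x => hsub a x, fun i => Subsingleton.elim _ _⟩, ?_⟩⟩
  intro u v
  simp only [SimpleGraph.top_adj, Equiv.coe_fn_mk]
  constructor
  · intro h; exact absurd rfl h
  · intro h; exact absurd h (hedgeless _ _)

lemma iso_K2_of_complete {V : Type*} (G : SimpleGraph V) (e : V ≃ Fin 2)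
    (hcomp : ∀ u v : V, u ≠ v → G.Adj u v) :
    Nonempty (G ≃g (⊤ : SimpleGraph (Fin 2))) := by
  refine ⟨⟨e, ?_⟩⟩
  intro u v
  simp only [SimpleGraph.top_adj]
  constructor
  · intro h
    exact hcomp u v (fun heq => h (by rw [heq]))
  · intro hadj heq
    exact hadj.ne (e.injective heq)

/-- Let `G` and `H` be finite connected graphs with `Γ(G) = Γ(H) = k`.  If `G` and `H`
are not both isomorphic to `K_1`, and not both isomorphic to `K_2`, then
`Γ(G □ H) ≥ k + 1`. -/
theorem grundy_boxProd_ge_succ {α β : Type*} [Fintype α] [Fintype β]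
    (G : SimpleGraph α) (H : SimpleGraph β) (k : ℕ)
    (hGc : G.Connected) (hHc : H.Connected)
    (hG : grundy G = k) (hH : grundy H = k)
    (h1 : ¬ (Nonempty (G ≃g (⊤ : SimpleGraph (Fin 1))) ∧
             Nonempty (H ≃g (⊤ : SimpleGraph (Fin 1)))))
    (h2 : ¬ (Nonempty (G ≃g (⊤ : SimpleGraph (Fin 2))) ∧
             Nonempty (H ≃g (⊤ : SimpleGraph (Fin 2))))) :
    grundy (G.boxProd H) ≥ k + 1 := by
  classical
  have hSG : ∃ S : Fin k → Set α, IsGreedyColoring G k S := by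
    have := grundy_spec G; rw [hG] at this; exact this
  have hSH : ∃ S : Fin k → Set β, IsGreedyColoring H k S := by
    have := grundy_spec H; rw [hH] at this; exact this
  obtain ⟨S, hS⟩ := hSG
  obtain ⟨T, hT⟩ := hSH
  -- k ≥ 1
  have hk1 : 1 ≤ k := by
    by_contra h
    have hk0 : k = 0 := by omega
    subst hk0
    obtain ⟨a⟩ := hGc.nonempty
    obtain ⟨i, -, -⟩ := hS.1 a
    exact i.elim0
  -- k ≠ 1
  rcases eq_or_lt_of_le hk1 with hk1' | hk2
  · -- k = 1 : both are K1, contradiction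
    exfalso
    have hkk : k = 1 := hk1'.symm
    subst hkk
    exact h1 ⟨iso_K1_of_grundy_one G hGc hS, iso_K1_of_grundy_one H hHc hT⟩
  · -- k ≥ 2
    show k + 1 ≤ grundy (G.boxProd H)
    by_cases hHcomp : ∀ u v : β, u ≠ v → H.Adj u v
    · by_cases hGcomp : ∀ u v : α, u ≠ v → G.Adj u v
      · -- both complete
        obtain ⟨eα⟩ := equiv_fin_of_complete G hS hGcomp
        obtain ⟨eβ⟩ := equiv_fin_of_complete H hT hHcomp
        rcases eq_or_lt_of_le (show 2 ≤ k from hk2) with hk2' | hk3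
        · -- k = 2 : both are K2, contradiction
          exfalso
          have hkk : k = 2 := hk2'.symm
          have e2α : α ≃ Fin 2 := eα.trans (finCongr hkk)
          have e2β : β ≃ Fin 2 := eβ.trans (finCongr hkk)
          exact h2 ⟨iso_K2_of_complete G e2α hGcomp,
            iso_K2_of_complete H e2β hHcomp⟩
        · -- k ≥ 3 : use the complete construction
          have hk3' : 3 ≤ k := hk3
          have h0k : (0 : ℕ) < k := by omega
          have h1k : (1 : ℕ) < k := by omega
          set y0 : β := eβ.symm ⟨0, h0k⟩
          set y1 : β := eβ.symm ⟨1, h1k⟩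
          have hyne : y0 ≠ y1 := by
            intro h
            have := eβ.symm.injective h
            simp [Fin.ext_iff] at this
          have hy : H.Adj y0 y1 := hHcomp _ _ hyne
          exact le_grundy_of_greedyOn (G.boxProd H) (lemmaC G H hk3' eα hGcomp hy) le_rfl
      · -- G not complete : induced P3 in G, use coloring of H, swap at the end
        obtain ⟨x0, x1, x2, h01, h02, h12ne, h12⟩ := exists_induced_path G hGc hGcomp
        obtain ⟨s, hslt, hnes, hstab, hwit⟩ := exists_sfun H hT
        obtain ⟨a, ha⟩ := hnes (k - 1) (by omega)
        have hGr := lemmaB H G hk2 s hslt hnes hstab hwit a ha x0 x1 x2 h01 h02 h12ne h12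
        obtain ⟨k', S', hk', hc⟩ := exists_extension (H.boxProd G)
          ((BDom s k a x0 x1 x2)ᶜ.ncard) _ _ _ le_rfl hGr
        have hc' := isGreedyColoring_boxProd_swap G H hc
        exact le_trans hk' (le_grundy (G.boxProd H) ⟨_, hc'⟩)
    · -- H not complete : induced P3 in H, use coloring of G
      obtain ⟨x0, x1, x2, h01, h02, h12ne, h12⟩ := exists_induced_path H hHc hHcomp
      obtain ⟨s, hslt, hnes, hstab, hwit⟩ := exists_sfun G hS
      obtain ⟨a, ha⟩ := hnes (k - 1) (by omega)
      have hGr := lemmaB G H hk2 s hslt hnes hstab hwit a ha x0 x1 x2 h01 h02 h12ne h12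
      exact le_grundy_of_greedyOn (G.boxProd H) hGr le_rfl
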